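/- For every point x ∈ □^{p,q} there exists a unique subset Q ⊆ {1,…,q} such that there is an open rectilinear embedding ι : □^{p,Q} ↪ □^{p,q} with x ∈ ι(□^{p,Q}_{[Q]}); namely, Q is exactly the set of indices i for which the (p+i)-th coordinate of x is 0. -/

import Mathlib

open Set

/-- Points of `ℝ^{p+q} = ℝ^p × ℝ^q`. -/
abbrev Pt (p q : ℕ) := (Fin p → ℝ) × (Fin q → ℝ)

/-- The cube `□^{p,Q} = (-1,1)^p × ∏ δ_i` where `δ_i = [0,1)` for `i ∈ Q`
and `δ_i = (-1,1)` otherwise. -/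
def cube (p q : ℕ) (Q : Set (Fin q)) : Set (Pt p q) :=
  {x | (∀ i, x.1 i ∈ Ioo (-1 : ℝ) 1) ∧
    ∀ j, (j ∈ Q → x.2 j ∈ Ico (0 : ℝ) 1) ∧ (j ∉ Q → x.2 j ∈ Ioo (-1 : ℝ) 1)}

/-- A rectilinear map of `ℝ^{p+q}`: composition of a coordinatewise dilation with
positive factors and a translation. -/
def IsRectilinear (p q : ℕ) (f : Pt p q → Pt p q) : Prop :=
  ∃ (a b : Fin p → ℝ) (c e : Fin q → ℝ),
    (∀ i, 0 < a i) ∧ (∀ j, 0 < c j) ∧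
      ∀ x : Pt p q, f x = (fun i => a i * x.1 i + b i, fun j => c j * x.2 j + e j)

/-- An open rectilinear embedding `□^{p,Q'} ↪ □^{p,Q}`: the restriction of a rectilinear
map sending `□^{p,Q'}` into `□^{p,Q}`, whose image is open in `□^{p,Q}`
(rectilinear maps are automatically injective). -/
def OpenRectEmb (p q : ℕ) (f : Pt p q → Pt p q) (Q' Q : Set (Fin q)) : Prop :=
  IsRectilinear p q f ∧ f '' cube p q Q' ⊆ cube p q Q ∧
    ∃ O : Set (Pt p q), IsOpen O ∧ f '' cube p q Q' = O ∩ cube p q Q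

/-- The deepest stratum `□^{p,Q}_{[Q]}` of `□^{p,Q}`: the points whose coordinates
indexed by `Q` all vanish. -/
def deepStratum (p q : ℕ) (Q : Set (Fin q)) : Set (Pt p q) :=
  {x ∈ cube p q Q | ∀ j ∈ Q, x.2 j = 0}

/-- For every point `x ∈ □^{p,q}` there is a unique `Q ⊆ {1,…,q}` such that `x` lies in
the image of the deepest stratum of some open rectilinear embedding `□^{p,Q} ↪ □^{p,q}`:
namely, `Q` is exactly the set of indices of vanishing coordinates of `x` among the
last `q` coordinates. -/
theorem exists_unique_type_of_point (p q : ℕ) (x : Pt p q) (hx : x ∈ cube p q Set.univ)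
    (Q : Set (Fin q)) :
    (∃ f : Pt p q → Pt p q, OpenRectEmb p q f Q Set.univ ∧
        x ∈ f '' deepStratum p q Q) ↔ Q = {j | x.2 j = 0} := by
  classical
  obtain ⟨hx1, hx2⟩ := hx
  constructor
  · rintro ⟨f, ⟨⟨a, b, c, e, ha, hc, hf⟩, hsub, O, hO, himg⟩, y, ⟨⟨hy1, hy2⟩, hy0⟩, hfy⟩
    have hxj : ∀ j', x.2 j' = c j' * y.2 j' + e j' := by
      intro j'; rw [← hfy, hf]
    ext j
    simp only [Set.mem_setOf_eq]
    constructor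
    · intro hjQ
      have hxje : x.2 j = e j := by rw [hxj j, hy0 j hjQ, mul_zero, zero_add]
      by_contra hne
      have hx0 : (0:ℝ) ≤ x.2 j := ((hx2 j).1 (Set.mem_univ j)).1
      have hx1' : x.2 j < 1 := ((hx2 j).1 (Set.mem_univ j)).2
      have hpos : 0 < x.2 j := lt_of_le_of_ne hx0 (Ne.symm hne)
      set g : ℝ → Pt p q := fun t => (x.1, Function.update x.2 j t) with hgdef
      have hg : Continuous g := by
        apply continuous_const.prodMk
        apply continuous_pi
        intro j'
        simp only [Function.update_apply]
        by_cases h : j' = j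
        · simpa [h] using continuous_id'
        · simpa [h] using continuous_const
      have hgx : g (x.2 j) = x := by
        simp [hgdef, Function.update_eq_self]
      have hxO : x ∈ O := by
        have hmem : x ∈ f '' cube p q Q := ⟨y, ⟨hy1, hy2⟩, hfy⟩
        rw [himg] at hmem; exact hmem.1
      obtain ⟨ε, hε, hball⟩ := Metric.isOpen_iff.mp (hO.preimage hg) (x.2 j)
        (by simp only [Set.mem_preimage, hgx]; exact hxO)
      have hm : 0 < min ε (x.2 j) := lt_min hε hpos
      have hm1 := min_le_left ε (x.2 j)
      have hm2 := min_le_right ε (x.2 j)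
      set t := x.2 j - min ε (x.2 j) / 2 with htdef
      have ht0 : 0 ≤ t := by rw [htdef]; linarith
      have htlt : t < x.2 j := by rw [htdef]; linarith
      have hgt : g t ∈ O := by
        apply hball
        rw [Metric.mem_ball, Real.dist_eq]
        rw [abs_of_nonpos (by rw [htdef]; linarith)]
        rw [htdef]; linarith
      have hgtc : g t ∈ cube p q Set.univ := by
        refine ⟨hx1, fun j' => ⟨fun _ => ?_, fun h => absurd (Set.mem_univ j') h⟩⟩
        by_cases h : j' = j
        · subst h
          simpa [hgdef] using ⟨ht0, lt_trans htlt hx1'⟩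
        · simp only [hgdef, Function.update_of_ne h]
          exact (hx2 j').1 (Set.mem_univ j')
      have hmem2 : g t ∈ f '' cube p q Q := by rw [himg]; exact ⟨hgt, hgtc⟩
      obtain ⟨z, hz, hfz⟩ := hmem2
      have hzj : 0 ≤ z.2 j := ((hz.2 j).1 hjQ).1
      have h1 : (g t).2 j = t := by simp [hgdef]
      have h2 : (f z).2 j = c j * z.2 j + e j := by rw [hf]
      rw [hfz, h1] at h2
      nlinarith [mul_nonneg (le_of_lt (hc j)) hzj, hc j]
    · intro h0
      by_contra hjQ
      have hyj := (hy2 j).2 hjQ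
      set t := (y.2 j - 1) / 2 with htdef
      have ht1 : -1 < t := by rw [htdef]; linarith [hyj.1]
      have ht2 : t < y.2 j := by rw [htdef]; linarith [hyj.1]
      have ht3 : t < 1 := lt_trans ht2 hyj.2
      set y' : Pt p q := (y.1, Function.update y.2 j t) with hy'def
      have hy'c : y' ∈ cube p q Q := by
        refine ⟨hy1, fun j' => ?_⟩
        by_cases h : j' = j
        · subst h
          exact ⟨fun hm => absurd hm hjQ, fun _ => by simpa [hy'def] using ⟨ht1, ht3⟩⟩
        · refine ⟨?_, ?_⟩ <;> intro hmem <;>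
            simp only [hy'def, Function.update_of_ne h]
          · exact (hy2 j').1 hmem
          · exact (hy2 j').2 hmem
      have hfy' : f y' ∈ cube p q Set.univ := hsub ⟨y', hy'c, rfl⟩
      have h1 : (f y').2 j = c j * t + e j := by rw [hf]; simp [hy'def]
      have h2 : 0 ≤ (f y').2 j := ((hfy'.2 j).1 (Set.mem_univ j)).1
      have h3 : c j * y.2 j + e j = 0 := by rw [← hxj j]; exact h0
      nlinarith [mul_lt_mul_of_pos_left ht2 (hc j)]
  · rintro rfl
    set a : Fin p → ℝ := fun i => (1 - |x.1 i|) / 2 with hadef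
    set c : Fin q → ℝ := fun j =>
      if x.2 j = 0 then 1/2 else min (x.2 j) (1 - x.2 j) / 2 with hcdef
    have habs : ∀ i, |x.1 i| < 1 := fun i => abs_lt.mpr ⟨(hx1 i).1, (hx1 i).2⟩
    have ha : ∀ i, 0 < a i := by
      intro i
      have := habs i
      show 0 < (1 - |x.1 i|) / 2
      linarith
    have haeq : ∀ i, a i = (1 - |x.1 i|) / 2 := fun i => rfl
    have hc : ∀ j, 0 < c j := by
      intro j
      show 0 < if x.2 j = 0 then (1:ℝ)/2 else min (x.2 j) (1 - x.2 j) / 2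
      split_ifs with h
      · norm_num
      · have h1 : 0 < x.2 j := lt_of_le_of_ne ((hx2 j).1 (Set.mem_univ j)).1 (Ne.symm h)
        have h2 : x.2 j < 1 := ((hx2 j).1 (Set.mem_univ j)).2
        have := lt_min h1 (by linarith : (0:ℝ) < 1 - x.2 j)
        linarith
    set f : Pt p q → Pt p q := fun z =>
      (fun i => a i * z.1 i + x.1 i, fun j => c j * z.2 j + x.2 j) with hfdef
    -- first coordinate bound
    have hfst : ∀ (i : Fin p) (s : ℝ), s ∈ Ioo (-1:ℝ) 1 →
        a i * s + x.1 i ∈ Ioo (x.1 i - a i) (x.1 i + a i) := by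
      intro i s hs
      constructor
      · nlinarith [mul_pos (ha i) (show (0:ℝ) < s + 1 by linarith [hs.1])]
      · nlinarith [mul_pos (ha i) (show (0:ℝ) < 1 - s by linarith [hs.2])]
    have hIa : ∀ i : Fin p, -1 < x.1 i - a i ∧ x.1 i + a i < 1 := by
      intro i
      have h1 := le_abs_self (x.1 i)
      have h2 := neg_abs_le (x.1 i)
      have h3 := haeq i
      constructor <;> [skip; skip] <;> (rw [h3]; linarith [habs i])
    -- second coordinate bounds
    have hceq0 : ∀ j, x.2 j = 0 → c j = 1/2 := by
      intro j h; show (if x.2 j = 0 then (1:ℝ)/2 else _) = 1/2; rw [if_pos h]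
    have hceq1 : ∀ j, x.2 j ≠ 0 → c j = min (x.2 j) (1 - x.2 j) / 2 := by
      intro j h
      show (if x.2 j = 0 then (1:ℝ)/2 else min (x.2 j) (1 - x.2 j) / 2) = _
      rw [if_neg h]
    have hIc : ∀ j, x.2 j ≠ 0 → 0 < x.2 j - c j ∧ x.2 j + c j < 1 := by
      intro j h
      have h1 : 0 < x.2 j := lt_of_le_of_ne ((hx2 j).1 (Set.mem_univ j)).1 (Ne.symm h)
      have h2 : x.2 j < 1 := ((hx2 j).1 (Set.mem_univ j)).2
      have h3 := hceq1 j h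
      have h4 := min_le_left (x.2 j) (1 - x.2 j)
      have h5 := min_le_right (x.2 j) (1 - x.2 j)
      rw [h3]
      constructor <;> linarith
    have hsnd : ∀ (j : Fin q) (s : ℝ),
        ((x.2 j = 0 → s ∈ Ico (0:ℝ) 1) ∧ (x.2 j ≠ 0 → s ∈ Ioo (-1:ℝ) 1)) →
        c j * s + x.2 j ∈ Ioo (x.2 j - c j) (x.2 j + c j) ∧
          c j * s + x.2 j ∈ Ico (0:ℝ) 1 := by
      intro j s hs
      by_cases h : x.2 j = 0
      · obtain ⟨hs0, hs1⟩ := hs.1 h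
        have hcj := hceq0 j h
        rw [hcj, h]
        norm_num
        refine ⟨⟨by linarith, by linarith⟩, by linarith, by linarith⟩
      · obtain ⟨hs0, hs1⟩ := hs.2 h
        have hcj := hc j
        have hI := hIc j h
        have hb1 : c j * s < c j := by nlinarith
        have hb2 : -(c j) < c j * s := by nlinarith
        refine ⟨⟨by linarith, by linarith⟩, by linarith, by linarith⟩
    have hsub : f '' cube p q {j | x.2 j = 0} ⊆ cube p q Set.univ := by
      rintro _ ⟨z, ⟨hz1, hz2⟩, rfl⟩
      refine ⟨fun i => ?_, fun j => ⟨fun _ => ?_, fun h => absurd (Set.mem_univ j) h⟩⟩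
      · have h1 := hfst i (z.1 i) (hz1 i)
        have h2 := hIa i
        show -1 < a i * z.1 i + x.1 i ∧ a i * z.1 i + x.1 i < 1
        exact ⟨by linarith [h1.1, h2.1], by linarith [h1.2, h2.2]⟩
      · exact (hsnd j (z.2 j) ⟨fun h => (hz2 j).1 h, fun h => (hz2 j).2 h⟩).2
    set O : Set (Pt p q) :=
      (Set.univ.pi fun i => Ioo (x.1 i - a i) (x.1 i + a i)) ×ˢ
        (Set.univ.pi fun j => Ioo (x.2 j - c j) (x.2 j + c j)) with hOdef
    have hOopen : IsOpen O :=
      ((isOpen_set_pi Set.finite_univ fun i _ => isOpen_Ioo).prod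
        (isOpen_set_pi Set.finite_univ fun j _ => isOpen_Ioo))
    have himg : f '' cube p q {j | x.2 j = 0} = O ∩ cube p q Set.univ := by
      apply Set.Subset.antisymm
      · rintro _ ⟨z, hzc, rfl⟩
        refine ⟨⟨fun i _ => hfst i (z.1 i) (hzc.1 i), fun j _ =>
          (hsnd j (z.2 j) ⟨fun h => (hzc.2 j).1 h, fun h => (hzc.2 j).2 h⟩).1⟩,
          hsub ⟨z, hzc, rfl⟩⟩
      · rintro z ⟨⟨hzO1, hzO2⟩, hzc1, hzc2⟩
        refine ⟨(fun i => (z.1 i - x.1 i) / a i, fun j => (z.2 j - x.2 j) / c j),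
          ⟨fun i => ?_, fun j => ⟨fun hj => ?_, fun hj => ?_⟩⟩, ?_⟩
        · have hb := hzO1 i (Set.mem_univ i)
          constructor
          · rw [lt_div_iff₀ (ha i)]; linarith [hb.1]
          · rw [div_lt_one (ha i)]; linarith [hb.2]
        · have hj' : x.2 j = 0 := hj
          have hb := hzO2 j (Set.mem_univ j)
          have hz0 : 0 ≤ z.2 j := ((hzc2 j).1 (Set.mem_univ j)).1
          constructor
          · exact div_nonneg (by linarith) (hc j).le
          · rw [div_lt_one (hc j)]; linarith [hb.2]
        · have hb := hzO2 j (Set.mem_univ j)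
          constructor
          · rw [lt_div_iff₀ (hc j)]; linarith [hb.1]
          · rw [div_lt_one (hc j)]; linarith [hb.2]
        · have h1 : ∀ i, a i * ((z.1 i - x.1 i) / a i) + x.1 i = z.1 i := by
            intro i
            have hne : a i ≠ 0 := (ha i).ne'
            field_simp
            ring
          have h2 : ∀ j, c j * ((z.2 j - x.2 j) / c j) + x.2 j = z.2 j := by
            intro j
            have hne : c j ≠ 0 := (hc j).ne'
            field_simp
            ring
          show (fun i => a i * _ + x.1 i, fun j => c j * _ + x.2 j) = z
          exact Prod.ext (funext h1) (funext h2)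
    refine ⟨f, ⟨⟨a, fun i => x.1 i, c, fun j => x.2 j, ha, hc, fun z => rfl⟩,
      hsub, O, hOopen, himg⟩, ?_⟩
    refine ⟨(fun _ => 0, fun _ => 0), ⟨⟨fun i => by norm_num, fun j =>
      ⟨fun _ => by norm_num, fun _ => by norm_num⟩⟩, fun j _ => rfl⟩, ?_⟩
    show (fun i => a i * 0 + x.1 i, fun j => c j * 0 + x.2 j) = x
    exact Prod.ext (funext fun i => by ring) (funext fun j => by ring)
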